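/- Let Γ be a countable discrete group, X a compact Hausdorff space with a Γ-action by homeomorphisms and base point x₀ ∈ X. Let (Mₙ) and M be amenable von Neumann subalgebras of L(Γ), and suppose every x ∈ M is the ‖·‖_{τ₀}-limit of a sequence (xₙ) with xₙ ∈ Mₙ for all n. For an amenable von Neumann subalgebra N ⊆ L(Γ) and f ∈ C(X), set f⁺(N) = sup{ Re φ(M_f) : φ an (N, τ₀)-hypertrace }. Then for every f ∈ C(X): f⁺(M) ≥ limsupₙ f⁺(Mₙ). -/

import Mathlib

open scoped InnerProductSpace ComplexOrder ENNReal
open ContinuousLinearMap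

noncomputable section

/-- A group `G` is amenable if there is a left-translation-invariant state (invariant mean)
on the algebra `ℓ^∞(G)` of bounded complex functions on `G`. -/
def HasInvariantMean (G : Type*) [Group G] : Prop :=
  ∃ m : lp (fun _ : G => ℂ) ∞ →ₗ[ℂ] ℂ,
    m 1 = 1 ∧
    (∀ f : lp (fun _ : G => ℂ) ∞, 0 ≤ m (star f * f)) ∧
    ∀ (g : G) (f₁ f₂ : lp (fun _ : G => ℂ) ∞), (∀ x : G, f₂ x = f₁ (g * x)) → m f₂ = m f₁

variable {Γ : Type*} [Group Γ] [Countable Γ]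
variable {H : Type*} [NormedAddCommGroup H] [InnerProductSpace ℂ H] [CompleteSpace H]

/-- A state on `B(H)`: a positive linear functional taking the value `1` at the unit. -/
def IsStateB (φ : (H →L[ℂ] H) →ₗ[ℂ] ℂ) : Prop :=
  φ 1 = 1 ∧ ∀ T : H →L[ℂ] H, 0 ≤ φ (adjoint T * T)

/-- The group von Neumann algebra `L(Γ)`: the double commutant of the range of the left
regular representation `lam`. -/
def groupVN (lam : Γ → H →L[ℂ] H) : Set (H →L[ℂ] H) :=
  Set.centralizer (Set.centralizer (Set.range lam))

/-- For a subgroup `K ≤ Γ`, the von Neumann subalgebra `L(K)` of `L(Γ)` generated by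
`{lam h : h ∈ K}`, realized as the double commutant. -/
def subgroupVN (lam : Γ → H →L[ℂ] H) (K : Subgroup Γ) : Set (H →L[ℂ] H) :=
  Set.centralizer (Set.centralizer (lam '' (K : Set Γ)))

/-- The canonical trace `τ₀(x) = ⟨x δ_e, δ_e⟩` on `L(Γ)`, where `δ_e = b 1`. -/
def tau0 (b : HilbertBasis Γ ℂ H) : (H →L[ℂ] H) → ℂ :=
  fun x => ⟪(b 1 : H), x (b 1)⟫_ℂ

/-- An `(M, τ₀)`-hypertrace: a state `φ` on `B(ℓ²(Γ))` with `φ|_{L(Γ)} = τ₀` and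
`φ(mT) = φ(Tm)` for all `m ∈ M`, `T ∈ B(ℓ²(Γ))`. -/
def IsHypertrace (b : HilbertBasis Γ ℂ H) (lam : Γ → H →L[ℂ] H)
    (M : Set (H →L[ℂ] H)) (φ : (H →L[ℂ] H) →ₗ[ℂ] ℂ) : Prop :=
  IsStateB φ ∧ (∀ x ∈ groupVN lam, φ x = tau0 b x) ∧
    ∀ m ∈ M, ∀ T : H →L[ℂ] H, φ (m * T) = φ (T * m)

/-- `f⁺(N) = sup { Re φ(M_f) : φ an (N, τ₀)-hypertrace }`. -/
def fplus {Γ : Type*} [Group Γ] [Countable Γ]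
    {H : Type*} [NormedAddCommGroup H] [InnerProductSpace ℂ H] [CompleteSpace H]
    {X : Type*} [TopologicalSpace X] [CompactSpace X]
    (b : HilbertBasis Γ ℂ H) (lam : Γ → H →L[ℂ] H)
    (Mop : C(X, ℂ) → (H →L[ℂ] H)) (N : Set (H →L[ℂ] H)) (f : C(X, ℂ)) : ℝ :=
  sSup ((fun φ : (H →L[ℂ] H) →ₗ[ℂ] ℂ => (φ (Mop f)).re) '' {φ | IsHypertrace b lam N φ})


set_option maxHeartbeats 1000000
set_option synthInstance.maxHeartbeats 400000
set_option linter.unusedSectionVars false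

namespace HyperAux

lemma memℓp_comp {α β : Type*} (e : α ≃ β) (f : lp (fun _ : α => ℂ) 2) :
    Memℓp (fun x : β => f (e.symm x)) 2 := by
  have h : Summable fun i : α => ‖f i‖ ^ (2 : ℝ≥0∞).toReal :=
    (memℓp_gen_iff (by norm_num)).1 (lp.memℓp f)
  exact memℓp_gen ((e.symm.summable_iff (f := fun i : α => ‖f i‖ ^ (2 : ℝ≥0∞).toReal)).2 h)

/-- Reindexing isometry on `ℓ²`. -/
noncomputable def lpCongr {α β : Type*} (e : α ≃ β) :
    lp (fun _ : α => ℂ) 2 ≃ₗᵢ[ℂ] lp (fun _ : β => ℂ) 2 where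
  toFun f := ⟨fun x => f (e.symm x), memℓp_comp e f⟩
  invFun g := ⟨fun x => g (e x), by exact (by simpa using memℓp_comp e.symm g : Memℓp (fun x => g (e x)) 2)⟩
  map_add' f g := by ext x; simp [lp.coeFn_add]; rfl
  map_smul' c f := by ext x; simp [lp.coeFn_smul]
  left_inv f := by ext x; simp
  right_inv g := by ext x; simp
  norm_map' f := by
    have h2 : (0:ℝ) < (2 : ℝ≥0∞).toReal := by norm_num
    rw [lp.norm_eq_tsum_rpow h2, lp.norm_eq_tsum_rpow h2]
    congr 1
    exact e.symm.tsum_eq (fun i : α => ‖f i‖ ^ (2 : ℝ≥0∞).toReal)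

@[simp] lemma lpCongr_apply {α β : Type*} (e : α ≃ β) (f : lp (fun _ : α => ℂ) 2) (x : β) :
    (lpCongr e f : ∀ _ : β, ℂ) x = f (e.symm x) := rfl

variable {Γ : Type*} [Group Γ]
variable {H : Type*} [NormedAddCommGroup H] [InnerProductSpace ℂ H] [CompleteSpace H]

/-- The right translation unitary. -/
noncomputable def rho (b : HilbertBasis Γ ℂ H) (g : Γ) : H ≃ₗᵢ[ℂ] H :=
  b.repr.trans ((lpCongr (Equiv.mulRight g)).trans b.repr.symm)

lemma rho_apply_basis (b : HilbertBasis Γ ℂ H) (g t : Γ) : rho b g (b t) = b (t * g) := by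
  classical
  simp only [rho, LinearIsometryEquiv.trans_apply]
  rw [b.repr_self]
  have : lpCongr (Equiv.mulRight g) (lp.single 2 t (1:ℂ)) = lp.single 2 (t * g) (1:ℂ) := by
    ext x
    simp only [lpCongr_apply]
    by_cases hx : x = t * g
    · subst hx
      have h1 : (Equiv.mulRight g).symm (t * g) = t := by simp
      rw [h1, lp.single_apply_self, lp.single_apply_self]
    · have h1 : (Equiv.mulRight g).symm x ≠ t := by
        intro h
        apply hx
        have h2 : ((Equiv.mulRight g).symm x) * g = t * g := by rw [h]
        simpa using h2
      rw [lp.single_apply_ne _ _ _ h1, lp.single_apply_ne _ _ _ hx]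
  rw [this, b.repr_symm_single]

/-- `rho g` as a continuous linear map. -/
noncomputable def rhoL (b : HilbertBasis Γ ℂ H) (g : Γ) : H →L[ℂ] H :=
  ((rho b g).toLinearIsometry).toContinuousLinearMap

@[simp] lemma rhoL_apply (b : HilbertBasis Γ ℂ H) (g : Γ) (x : H) :
    rhoL b g x = rho b g x := rfl

lemma clm_ext_basis (b : HilbertBasis Γ ℂ H) {A B : H →L[ℂ] H}
    (h : ∀ t, A (b t) = B (b t)) : A = B := by
  have hd : Dense (Submodule.span ℂ (Set.range ⇑b) : Set H) :=
    Submodule.dense_iff_topologicalClosure_eq_top.2 b.dense_span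
  exact ContinuousLinearMap.ext_on hd (by rintro _ ⟨t, rfl⟩; exact h t)

lemma rhoL_mul_rhoL (b : HilbertBasis Γ ℂ H) (g : Γ) (x : H) :
    rho b g (rho b g⁻¹ x) = x := by
  have : rhoL b g * rhoL b g⁻¹ = 1 := by
    apply clm_ext_basis b
    intro t
    simp [ContinuousLinearMap.mul_apply, rho_apply_basis]
  simpa [ContinuousLinearMap.mul_apply] using DFunLike.congr_fun this x

lemma rhoL_mem_centralizer (b : HilbertBasis Γ ℂ H) (lam : Γ → H →L[ℂ] H)
    (hlam : ∀ g t : Γ, lam g (b t) = b (g * t)) (g : Γ) :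
    rhoL b g ∈ Set.centralizer (Set.range lam) := by
  rintro _ ⟨h, rfl⟩
  apply clm_ext_basis b
  intro t
  simp [ContinuousLinearMap.mul_apply, rho_apply_basis, hlam, mul_assoc]

/-- Commutation of elements of the group von Neumann algebra with right translations. -/
lemma comm_rho (b : HilbertBasis Γ ℂ H) {lam : Γ → H →L[ℂ] H}
    (hlam : ∀ g t : Γ, lam g (b t) = b (g * t)) {a : H →L[ℂ] H}
    (ha : a ∈ groupVN lam) (g : Γ) (x : H) : a (rho b g x) = rho b g (a x) := by
  have h := ha (rhoL b g) (rhoL_mem_centralizer b lam hlam g)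
  simpa [ContinuousLinearMap.mul_apply] using (DFunLike.congr_fun h x).symm

/-- Traciality of `τ₀`. -/
lemma tau0_mul_star (b : HilbertBasis Γ ℂ H) {lam : Γ → H →L[ℂ] H}
    (hlam : ∀ g t : Γ, lam g (b t) = b (g * t)) {a : H →L[ℂ] H}
    (ha : a ∈ groupVN lam) :
    tau0 b (a * adjoint a) = tau0 b (adjoint a * a) := by
  set δ := b 1 with hδ
  set v := a δ with hv
  set w := adjoint a δ with hw
  have key : ∀ g : Γ, ⟪(b g : H), w⟫_ℂ = ⟪v, (b g⁻¹ : H)⟫_ℂ := by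
    intro g
    have h1 : ⟪(b g : H), w⟫_ℂ = ⟪a (b g), δ⟫_ℂ := adjoint_inner_right a (b g) δ
    have h2 : (b g : H) = rho b g δ := by rw [hδ, rho_apply_basis, one_mul]
    have h3 : a (rho b g δ) = rho b g v := comm_rho b hlam ha g δ
    have h4 : (δ : H) = rho b g (rho b g⁻¹ δ) := (rhoL_mul_rhoL b g δ).symm
    rw [h1, h2, h3]
    calc ⟪rho b g v, δ⟫_ℂ = ⟪rho b g v, rho b g (rho b g⁻¹ δ)⟫_ℂ := by rw [← h4]
      _ = ⟪v, rho b g⁻¹ δ⟫_ℂ := (rho b g).inner_map_map v _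
      _ = ⟪v, (b g⁻¹ : H)⟫_ℂ := by rw [hδ, rho_apply_basis, one_mul]
  have lhs : tau0 b (a * adjoint a) = ⟪w, w⟫_ℂ := by
    show ⟪δ, a (adjoint a δ)⟫_ℂ = ⟪w, w⟫_ℂ
    exact (adjoint_inner_left a w δ).symm
  have rhs : tau0 b (adjoint a * a) = ⟪v, v⟫_ℂ := by
    show ⟪δ, adjoint a (a δ)⟫_ℂ = ⟪v, v⟫_ℂ
    exact adjoint_inner_right a δ v
  rw [lhs, rhs]
  rw [← b.tsum_inner_mul_inner w w, ← b.tsum_inner_mul_inner v v]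
  have hterm : ∀ g : Γ, ⟪w, (b g : H)⟫_ℂ * ⟪(b g : H), w⟫_ℂ
      = ⟪v, (b g⁻¹ : H)⟫_ℂ * ⟪(b g⁻¹ : H), v⟫_ℂ := by
    intro g
    have h5 : ⟪w, (b g : H)⟫_ℂ = ⟪(b g⁻¹ : H), v⟫_ℂ := by
      rw [← inner_conj_symm, key g, inner_conj_symm]
    rw [h5, key g, mul_comm]
  calc ∑' g, ⟪w, (b g : H)⟫_ℂ * ⟪(b g : H), w⟫_ℂ
      = ∑' g, ⟪v, (b g⁻¹ : H)⟫_ℂ * ⟪(b g⁻¹ : H), v⟫_ℂ := tsum_congr hterm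
    _ = ∑' g, ⟪v, (b g : H)⟫_ℂ * ⟪(b g : H), v⟫_ℂ :=
        (Equiv.inv Γ).tsum_eq (fun g => ⟪v, (b g : H)⟫_ℂ * ⟪(b g : H), v⟫_ℂ)


section Centralizer

variable {R : Type*} [Ring R] [StarRing R]

lemma sub_mem_centralizer {S : Set R} {a c : R} (ha : a ∈ Set.centralizer S)
    (hc : c ∈ Set.centralizer S) : a - c ∈ Set.centralizer S := by
  intro m hm
  rw [mul_sub, sub_mul, ha m hm, hc m hm]

lemma star_mem_centralizer {S : Set R} (hS : ∀ s ∈ S, star s ∈ S) {a : R}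
    (ha : a ∈ Set.centralizer S) : star a ∈ Set.centralizer S := by
  intro m hm
  have h := congrArg star (ha (star m) (hS m hm))
  rw [star_mul, star_mul, star_star] at h
  exact h.symm

lemma centralizer_star_closed {S : Set R} (hS : ∀ s ∈ S, star s ∈ S) :
    ∀ s ∈ Set.centralizer S, star s ∈ Set.centralizer S :=
  fun _ hs => star_mem_centralizer hS hs

end Centralizer

section State

variable {H : Type*} [NormedAddCommGroup H] [InnerProductSpace ℂ H] [CompleteSpace H]
variable (φ : (H →L[ℂ] H) →ₗ[ℂ] ℂ)

lemma state_pos (hφ : IsStateB φ) (T : H →L[ℂ] H) : 0 ≤ φ (star T * T) := by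
  rw [star_eq_adjoint]; exact hφ.2 T

lemma cnonneg_re {z : ℂ} (h : 0 ≤ z) : 0 ≤ z.re := by
  rw [Complex.le_def] at h; simpa using h.1

lemma cnonneg_im {z : ℂ} (h : 0 ≤ z) : z.im = 0 := by
  rw [Complex.le_def] at h; simpa using h.2.symm

/-- Key: for a positive functional, `Im (φ(c* d) + φ(d* c)) = 0`. -/
lemma state_im_sum (hφ : IsStateB φ) (c d : H →L[ℂ] H) :
    (φ (star c * d) + φ (star d * c)).im = 0 := by
  have e1 : star (c + d) * (c + d)
      = star c * c + (star c * d + star d * c) + star d * d := by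
    rw [star_add, add_mul, mul_add, mul_add]; abel
  have e2 : φ (star (c + d) * (c + d))
      = φ (star c * c) + (φ (star c * d) + φ (star d * c)) + φ (star d * d) := by
    rw [e1]; simp [map_add]
  have h0 := cnonneg_im (state_pos φ hφ (c + d))
  have h1 := cnonneg_im (state_pos φ hφ c)
  have h2 := cnonneg_im (state_pos φ hφ d)
  rw [e2] at h0
  simp only [Complex.add_im] at h0 ⊢
  linarith

/-- Hermitian symmetry of a positive functional. -/
lemma state_herm (hφ : IsStateB φ) (a c : H →L[ℂ] H) :
    φ (star c * a) = starRingEnd ℂ (φ (star a * c)) := by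
  have key1 := state_im_sum φ hφ a c
  have key2 := state_im_sum φ hφ (Complex.I • a) c
  have ea : star (Complex.I • a) * c = (-Complex.I) • (star a * c) := by
    rw [star_smul, smul_mul_assoc]
    simp [Complex.star_def, Complex.conj_I]
  have eb : star c * (Complex.I • a) = Complex.I • (star c * a) := by
    rw [mul_smul_comm]
  rw [ea, eb, map_smul, map_smul] at key2
  set z := φ (star a * c)
  set w := φ (star c * a)
  simp only [smul_eq_mul, Complex.add_im, Complex.mul_im, Complex.neg_re, Complex.I_re,
    Complex.neg_im, Complex.I_im, Complex.add_re] at key2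
  apply Complex.ext
  · simp only [Complex.conj_re]
    linarith
  · simp only [Complex.conj_im]
    linarith [Complex.add_im z w ▸ key1]

/-- The sesquilinear form of a state, as a `PreInnerProductSpace.Core`. -/
def stateCore (hφ : IsStateB φ) : PreInnerProductSpace.Core ℂ (H →L[ℂ] H) where
  inner a c := φ (star a * c)
  conj_inner_symm a c := (state_herm φ hφ c a).symm
  re_inner_nonneg a := cnonneg_re (state_pos φ hφ a)
  add_left a c d := by
    show φ (star (a + c) * d) = φ (star a * d) + φ (star c * d)
    rw [star_add, add_mul, map_add]
  smul_left a c r := by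
    show φ (star (r • a) * c) = starRingEnd ℂ r * φ (star a * c)
    rw [star_smul, smul_mul_assoc, map_smul]
    simp [Complex.star_def]

/-- Cauchy–Schwarz for states. -/
lemma state_cs (hφ : IsStateB φ) (a c : H →L[ℂ] H) :
    ‖φ (star a * c)‖ ≤
      Real.sqrt (φ (star a * a)).re * Real.sqrt (φ (star c * c)).re := by
  letI core := stateCore φ hφ
  have h : ‖φ (star a * c)‖ * ‖φ (star c * a)‖ ≤ (φ (star a * a)).re * (φ (star c * c)).re :=
    @InnerProductSpace.Core.inner_mul_inner_self_le ℂ _ _ _ _ core a c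
  have hconj : ‖φ (star c * a)‖ = ‖φ (star a * c)‖ := by
    rw [state_herm φ hφ a c, RCLike.norm_conj]
  rw [hconj] at h
  have hA : 0 ≤ (φ (star a * a)).re := cnonneg_re (state_pos φ hφ a)
  have h2 : ‖φ (star a * c)‖ ≤ Real.sqrt ((φ (star a * a)).re * (φ (star c * c)).re) :=
    Real.le_sqrt_of_sq_le (by rw [sq]; exact h)
  rwa [Real.sqrt_mul hA] at h2

lemma state_nonneg (hφ : IsStateB φ) {X : H →L[ℂ] H} (hX : 0 ≤ X) : 0 ≤ φ X := by
  obtain s := CFC.sqrt X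
  have hs : 0 ≤ CFC.sqrt X := CFC.sqrt_nonneg X
  have hmul : CFC.sqrt X * CFC.sqrt X = X := CFC.sqrt_mul_sqrt_self X hX
  have hsa : star (CFC.sqrt X) = CFC.sqrt X := (IsSelfAdjoint.of_nonneg hs).star_eq
  have := state_pos φ hφ (CFC.sqrt X)
  rwa [hsa, hmul] at this

lemma state_re_le (hφ : IsStateB φ) (T : H →L[ℂ] H) :
    (φ (star T * T)).re ≤ ‖T‖ ^ 2 := by
  have hle : star T * T ≤ algebraMap ℝ (H →L[ℂ] H) (‖T‖ ^ 2) :=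
    CStarAlgebra.star_mul_le_algebraMap_norm_sq
  have h0 : 0 ≤ φ (algebraMap ℝ (H →L[ℂ] H) (‖T‖ ^ 2) - star T * T) :=
    state_nonneg φ hφ (by rwa [sub_nonneg])
  have halg : algebraMap ℝ (H →L[ℂ] H) (‖T‖ ^ 2) = ((‖T‖ ^ 2 : ℝ) : ℂ) • 1 := by
    rw [IsScalarTower.algebraMap_apply ℝ ℂ (H →L[ℂ] H), Algebra.algebraMap_eq_smul_one]
    norm_num
  rw [map_sub, halg, map_smul, hφ.1] at h0
  have := cnonneg_re h0
  simp only [Complex.sub_re, smul_eq_mul, mul_one, Complex.ofReal_re] at this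
  linarith

lemma state_norm_le (hφ : IsStateB φ) (T : H →L[ℂ] H) : ‖φ T‖ ≤ ‖T‖ := by
  have h1 : φ T = φ (star (1 : H →L[ℂ] H) * T) := by rw [star_one, one_mul]
  have h2 := state_cs φ hφ 1 T
  rw [← h1] at h2
  have h3 : φ (star (1 : H →L[ℂ] H) * (1 : H →L[ℂ] H)) = 1 := by
    rw [star_one, one_mul, hφ.1]
  rw [h3] at h2
  simp only [Complex.one_re, Real.sqrt_one, one_mul] at h2
  calc ‖φ T‖ ≤ Real.sqrt (φ (star T * T)).re := h2
    _ ≤ Real.sqrt (‖T‖ ^ 2) := Real.sqrt_le_sqrt (state_re_le φ hφ T)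
    _ = ‖T‖ := by rw [Real.sqrt_sq (norm_nonneg T)]

lemma state_sqrt_le (hφ : IsStateB φ) (T : H →L[ℂ] H) :
    Real.sqrt (φ (star T * T)).re ≤ ‖T‖ := by
  calc Real.sqrt (φ (star T * T)).re ≤ Real.sqrt (‖T‖ ^ 2) :=
      Real.sqrt_le_sqrt (state_re_le φ hφ T)
    _ = ‖T‖ := Real.sqrt_sq (norm_nonneg T)

end State


end HyperAux

/-- **upper semicontinuity.** Let `(Mₙ)` and `M` be amenable von Neumann
subalgebras of `L(Γ)` such that every `x ∈ M` is a `‖·‖_{τ₀}`-limit of a sequence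
`xₙ ∈ Mₙ`. Then for every `f ∈ C(X)`, `f⁺(M) ≥ limsupₙ f⁺(Mₙ)`. -/
theorem fplus_upper_semicontinuous
    {Γ : Type*} [Group Γ] [Countable Γ]
    {H : Type*} [NormedAddCommGroup H] [InnerProductSpace ℂ H] [CompleteSpace H]
    (b : HilbertBasis Γ ℂ H) (lam : Γ → H →L[ℂ] H)
    (hlam : ∀ g t : Γ, lam g (b t) = b (g * t))
    (hmul : ∀ g h : Γ, lam (g * h) = lam g * lam h)
    (hadj : ∀ g : Γ, adjoint (lam g) = lam g⁻¹)
    {X : Type*} [TopologicalSpace X] [CompactSpace X] [T2Space X]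
    [MulAction Γ X] (hc : ∀ g : Γ, Continuous fun y : X => g • y)
    (x₀ : X)
    (Mop : C(X, ℂ) → (H →L[ℂ] H))
    (hMop : ∀ (f : C(X, ℂ)) (t : Γ), Mop f (b t) = f (t • x₀) • (b t : H))
    (Mn : ℕ → VonNeumannAlgebra H) (M : VonNeumannAlgebra H)
    (hMn : ∀ n, (Mn n : Set (H →L[ℂ] H)) ⊆ groupVN lam)
    (hMsub : (M : Set (H →L[ℂ] H)) ⊆ groupVN lam)
    (hMnAmen : ∀ n, ∃ φ : (H →L[ℂ] H) →ₗ[ℂ] ℂ, IsHypertrace b lam (Mn n : Set (H →L[ℂ] H)) φ)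
    (hMAmen : ∃ φ : (H →L[ℂ] H) →ₗ[ℂ] ℂ, IsHypertrace b lam (M : Set (H →L[ℂ] H)) φ)
    (happrox : ∀ x ∈ M, ∃ xs : ℕ → H →L[ℂ] H, (∀ n, xs n ∈ Mn n) ∧
      Filter.Tendsto (fun n => Real.sqrt (tau0 b (adjoint (x - xs n) * (x - xs n))).re)
        Filter.atTop (nhds 0)) :
    ∀ f : C(X, ℂ),
      Filter.limsup (fun n => fplus b lam Mop (Mn n : Set (H →L[ℂ] H)) f) Filter.atTop ≤
        fplus b lam Mop (M : Set (H →L[ℂ] H)) f := by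
  classical
  intro f
  set A : ℝ := ‖Mop f‖ with hA
  -- basic closure properties of the group von Neumann algebra
  have hstar_range : ∀ s ∈ Set.range lam, star s ∈ Set.range lam := by
    rintro _ ⟨g, rfl⟩
    exact ⟨g⁻¹, ((star_eq_adjoint (lam g)).trans (hadj g)).symm⟩
  have hgv_star : ∀ x ∈ groupVN lam, star x ∈ groupVN lam :=
    HyperAux.centralizer_star_closed (HyperAux.centralizer_star_closed hstar_range)
  have hgv_sub : ∀ x ∈ groupVN lam, ∀ y ∈ groupVN lam, x - y ∈ groupVN lam :=
    fun x hx y hy => HyperAux.sub_mem_centralizer hx hy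
  have hgv_mul : ∀ x ∈ groupVN lam, ∀ y ∈ groupVN lam, x * y ∈ groupVN lam :=
    fun x hx y hy => Set.mul_mem_centralizer hx hy
  -- the image sets
  set S : Set (H →L[ℂ] H) → Set ℝ := fun N =>
    (fun φ : (H →L[ℂ] H) →ₗ[ℂ] ℂ => (φ (Mop f)).re) '' {φ | IsHypertrace b lam N φ} with hS
  have hSbound : ∀ N : Set (H →L[ℂ] H), ∀ y ∈ S N, |y| ≤ A := by
    rintro N _ ⟨φ, hφ, rfl⟩
    calc |(φ (Mop f)).re| ≤ ‖φ (Mop f)‖ := Complex.abs_re_le_norm _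
      _ ≤ A := HyperAux.state_norm_le φ hφ.1 (Mop f)
  set fn : ℕ → ℝ := fun n => fplus b lam Mop (Mn n : Set (H →L[ℂ] H)) f with hfn
  have hfn_eq : ∀ n, fn n = sSup (S ((Mn n : Set (H →L[ℂ] H)))) := fun n => rfl
  have hfn_le : ∀ n, fn n ≤ A := by
    intro n
    rw [hfn_eq]
    exact Real.sSup_le (fun y hy => le_trans (le_abs_self y) (hSbound _ y hy)) (norm_nonneg _)
  have hSn_ne : ∀ n, (S ((Mn n : Set (H →L[ℂ] H)))).Nonempty := by
    intro n
    obtain ⟨φ, hφ⟩ := hMnAmen n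
    exact ⟨_, ⟨φ, hφ, rfl⟩⟩
  have hSn_bdd : ∀ N : Set (H →L[ℂ] H), BddAbove (S N) :=
    fun N => ⟨A, fun y hy => le_trans (le_abs_self y) (hSbound N y hy)⟩
  have hfn_ge : ∀ n, -A ≤ fn n := by
    intro n
    obtain ⟨y, hy⟩ := hSn_ne n
    have h1 : -A ≤ y := neg_le_of_abs_le (hSbound _ y hy)
    exact le_trans h1 (le_csSup (hSn_bdd _) hy)
  -- the limsup is a cluster value
  set L : ℝ := Filter.limsup fn Filter.atTop with hL
  have hbdd_above : Filter.IsBoundedUnder (· ≤ ·) Filter.atTop fn :=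
    Filter.isBoundedUnder_of ⟨A, hfn_le⟩
  have hbdd_below : Filter.IsBoundedUnder (· ≥ ·) Filter.atTop fn :=
    Filter.isBoundedUnder_of ⟨-A, hfn_ge⟩
  have hcobdd : Filter.IsCoboundedUnder (· ≤ ·) Filter.atTop fn :=
    hbdd_below.isCoboundedUnder_le
  have hcluster : MapClusterPt L Filter.atTop fn := by
    rw [mapClusterPt_iff_frequently]
    intro s hs
    obtain ⟨ε, hε, hball⟩ := Metric.mem_nhds_iff.1 hs
    have h1 : ∀ᶠ n in Filter.atTop, fn n < L + ε / 2 :=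
      Filter.eventually_lt_of_limsup_lt (by linarith) hbdd_above
    have h2 : ∃ᶠ n in Filter.atTop, L - ε / 2 < fn n :=
      Filter.frequently_lt_of_lt_limsup hcobdd (by linarith)
    refine (h2.and_eventually h1).mono ?_
    rintro n ⟨hn1, hn2⟩
    apply hball
    rw [Metric.mem_ball, Real.dist_eq, abs_lt]
    constructor <;> linarith
  obtain ⟨U, hUle, hUtend⟩ := mapClusterPt_iff_ultrafilter.1 hcluster
  -- choose near-optimal hypertraces
  have hchoice : ∀ n : ℕ, ∃ φ : (H →L[ℂ] H) →ₗ[ℂ] ℂ,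
      IsHypertrace b lam (Mn n : Set (H →L[ℂ] H)) φ ∧
        fn n - 1 / ((n : ℝ) + 1) < (φ (Mop f)).re := by
    intro n
    have hlt : fn n - 1 / ((n : ℝ) + 1) < sSup (S ((Mn n : Set (H →L[ℂ] H)))) := by
      rw [← hfn_eq]
      have : (0:ℝ) < 1 / ((n : ℝ) + 1) := by positivity
      linarith
    obtain ⟨y, hy, hlt'⟩ := exists_lt_of_lt_csSup (hSn_ne n) hlt
    obtain ⟨φ, hφ, rfl⟩ := hy
    exact ⟨φ, hφ, hlt'⟩
  choose φs hHyp hval using hchoice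
  have hφbound : ∀ (n : ℕ) (T : H →L[ℂ] H), ‖φs n T‖ ≤ ‖T‖ :=
    fun n T => HyperAux.state_norm_le (φs n) (hHyp n).1 T
  -- ultrafilter limits
  have hex : ∀ T : H →L[ℂ] H, ∃ z : ℂ, Filter.Tendsto (fun n => φs n T) U (nhds z) := by
    intro T
    have hcpt : IsCompact (Metric.closedBall (0:ℂ) ‖T‖) := isCompact_closedBall _ _
    obtain ⟨z, _, hz⟩ := hcpt.ultrafilter_le_nhds (U.map fun n => φs n T) (by
      rw [Ultrafilter.coe_map, Filter.le_principal_iff, Filter.mem_map]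
      filter_upwards [] with n
      simp only [Set.mem_preimage, Metric.mem_closedBall, dist_zero_right]
      exact hφbound n T)
    exact ⟨z, hz⟩
  choose ψ hψ using hex
  have hUneBot : (U : Filter ℕ).NeBot := Ultrafilter.neBot U
  -- the limit functional
  set Φ : (H →L[ℂ] H) →ₗ[ℂ] ℂ :=
    { toFun := ψ
      map_add' := by
        intro T R
        have h1 : Filter.Tendsto (fun n => φs n (T + R)) U (nhds (ψ T + ψ R)) := by
          have := (hψ T).add (hψ R)
          exact this.congr (fun n => (map_add (φs n) T R).symm)
        exact tendsto_nhds_unique (hψ (T + R)) h1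
      map_smul' := by
        intro c T
        have h1 : Filter.Tendsto (fun n => φs n (c • T)) U (nhds (c * ψ T)) := by
          have := (hψ T).const_mul c
          exact this.congr (fun n => by rw [map_smul, smul_eq_mul])
        exact tendsto_nhds_unique (hψ (c • T)) h1 } with hΦ
  have hΦ_apply : ∀ T, Φ T = ψ T := fun T => rfl
  have hΦ1 : Φ 1 = 1 := by
    rw [hΦ_apply]
    refine tendsto_nhds_unique (hψ 1) ?_
    exact Filter.Tendsto.congr (fun n => ((hHyp n).1.1).symm)
      (tendsto_const_nhds : Filter.Tendsto (fun _ : ℕ => (1:ℂ)) U (nhds 1))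
  have hlim_re : ∀ T, Filter.Tendsto (fun n => (φs n T).re) U (nhds (ψ T).re) :=
    fun T => (Complex.continuous_re.tendsto _).comp (hψ T)
  have hlim_im : ∀ T, Filter.Tendsto (fun n => (φs n T).im) U (nhds (ψ T).im) :=
    fun T => (Complex.continuous_im.tendsto _).comp (hψ T)
  have hΦpos : ∀ T : H →L[ℂ] H, 0 ≤ Φ (adjoint T * T) := by
    intro T
    set X := adjoint T * T with hX
    have hpos : ∀ n, 0 ≤ φs n X := fun n => (hHyp n).1.2 T
    have hre : 0 ≤ (ψ X).re :=
      ge_of_tendsto (hlim_re X)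
        (Filter.Eventually.of_forall fun n => HyperAux.cnonneg_re (hpos n))
    have him : (ψ X).im = 0 := by
      refine tendsto_nhds_unique ((hlim_im X).congr fun n => HyperAux.cnonneg_im (hpos n)) ?_
      exact tendsto_const_nhds
    rw [hΦ_apply, Complex.le_def]
    refine ⟨by simpa using hre, by simpa using him.symm⟩
  have hΦtr : ∀ x ∈ groupVN lam, Φ x = tau0 b x := by
    intro x hx
    rw [hΦ_apply]
    refine tendsto_nhds_unique ((hψ x).congr fun n => (hHyp n).2.1 x hx) tendsto_const_nhds
  -- the commutation property
  have hΦcomm : ∀ m ∈ (M : Set (H →L[ℂ] H)), ∀ T : H →L[ℂ] H, Φ (m * T) = Φ (T * m) := by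
    intro m hm T
    obtain ⟨xs, hxs, hτ⟩ := happrox m hm
    set y : ℕ → H →L[ℂ] H := fun n => m - xs n with hy
    have hygv : ∀ n, y n ∈ groupVN lam :=
      fun n => hgv_sub m (hMsub hm) (xs n) (hMn n (hxs n))
    set ε : ℕ → ℝ := fun n => Real.sqrt (tau0 b (adjoint (m - xs n) * (m - xs n))).re with hε
    have hεnn : ∀ n, 0 ≤ ε n := fun n => Real.sqrt_nonneg _
    set d : ℕ → ℂ := fun n => φs n (m * T) - φs n (T * m) with hd
    have hτ0 : ∀ n, φs n (star (y n) * y n) = tau0 b (star (y n) * y n) := by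
      intro n
      exact (hHyp n).2.1 _ (hgv_mul _ (hgv_star _ (hygv n)) _ (hygv n))
    have hτ0' : ∀ n, φs n (y n * star (y n)) = tau0 b (star (y n) * y n) := by
      intro n
      have h1 : φs n (y n * star (y n)) = tau0 b (y n * star (y n)) :=
        (hHyp n).2.1 _ (hgv_mul _ (hygv n) _ (hgv_star _ (hygv n)))
      rw [h1, star_eq_adjoint]
      exact HyperAux.tau0_mul_star b hlam (hygv n)
    have hsq : ∀ n, Real.sqrt (tau0 b (star (y n) * y n)).re = ε n := by
      intro n
      have hyw : star (y n) * y n = adjoint (m - xs n) * (m - xs n) := by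
        rw [star_eq_adjoint, hy]
      rw [hε, hyw]
    have hbound : ∀ n, ‖d n‖ ≤ 2 * ‖T‖ * ε n := by
      intro n
      have hcom : φs n (xs n * T) = φs n (T * xs n) := (hHyp n).2.2 (xs n) (hxs n) T
      have hdn : d n = φs n (y n * T) - φs n (T * y n) := by
        have e1 : m * T = y n * T + xs n * T := by rw [hy]; simp [sub_mul]
        have e2 : T * m = T * y n + T * xs n := by rw [hy]; simp [mul_sub]
        show φs n (m * T) - φs n (T * m) = _
        rw [e1, e2, map_add, map_add, hcom]
        ring
      -- first term
      have hterm1 : ‖φs n (y n * T)‖ ≤ ε n * ‖T‖ := by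
        have hcs := HyperAux.state_cs (φs n) (hHyp n).1 (star (y n)) T
        rw [star_star] at hcs
        have h1 : Real.sqrt (φs n (y n * star (y n))).re = ε n := by
          rw [hτ0' n, hsq n]
        rw [h1] at hcs
        calc ‖φs n (y n * T)‖ ≤ ε n * Real.sqrt (φs n (star T * T)).re := hcs
          _ ≤ ε n * ‖T‖ := by
              have := HyperAux.state_sqrt_le (φs n) (hHyp n).1 T
              exact mul_le_mul_of_nonneg_left this (hεnn n)
      -- second term
      have hterm2 : ‖φs n (T * y n)‖ ≤ ‖T‖ * ε n := by
        have hcs := HyperAux.state_cs (φs n) (hHyp n).1 (star T) (y n)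
        rw [star_star] at hcs
        have h1 : Real.sqrt (φs n (star (y n) * y n)).re = ε n := by
          rw [hτ0 n, hsq n]
        rw [h1] at hcs
        calc ‖φs n (T * y n)‖ ≤ Real.sqrt (φs n (T * star T)).re * ε n := hcs
          _ ≤ ‖T‖ * ε n := by
              have h2 := HyperAux.state_sqrt_le (φs n) (hHyp n).1 (star T)
              rw [star_star, norm_star] at h2
              exact mul_le_mul_of_nonneg_right h2 (hεnn n)
      calc ‖d n‖ = ‖φs n (y n * T) - φs n (T * y n)‖ := by rw [hdn]
        _ ≤ ‖φs n (y n * T)‖ + ‖φs n (T * y n)‖ := norm_sub_le _ _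
        _ ≤ ε n * ‖T‖ + ‖T‖ * ε n := add_le_add hterm1 hterm2
        _ = 2 * ‖T‖ * ε n := by ring
    have hεto0 : Filter.Tendsto ε Filter.atTop (nhds 0) := hτ
    have hd0 : Filter.Tendsto d Filter.atTop (nhds 0) := by
      refine squeeze_zero_norm hbound ?_
      have h := hεto0.const_mul (2 * ‖T‖)
      rw [mul_zero] at h
      exact h
    have hdU : Filter.Tendsto d U (nhds 0) := hd0.mono_left hUle
    have hdU' : Filter.Tendsto d U (nhds (ψ (m * T) - ψ (T * m))) :=
      (hψ (m * T)).sub (hψ (T * m))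
    have := tendsto_nhds_unique hdU' hdU
    rw [hΦ_apply, hΦ_apply]
    exact sub_eq_zero.1 this
  have hHypM : IsHypertrace b lam (M : Set (H →L[ℂ] H)) Φ := ⟨⟨hΦ1, hΦpos⟩, hΦtr, hΦcomm⟩
  -- final estimate
  have hΦval : L ≤ (Φ (Mop f)).re := by
    have t1 : Filter.Tendsto (fun n => (φs n (Mop f)).re) U (nhds (Φ (Mop f)).re) := by
      rw [hΦ_apply]
      exact hlim_re (Mop f)
    have t0 : Filter.Tendsto (fun n : ℕ => 1 / ((n : ℝ) + 1)) U (nhds 0) :=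
      tendsto_one_div_add_atTop_nhds_zero_nat.mono_left hUle
    have t2 : Filter.Tendsto (fun n => fn n - 1 / ((n : ℝ) + 1)) U (nhds (L - 0)) :=
      hUtend.sub t0
    have := le_of_tendsto_of_tendsto' t2 t1 (fun n => (hval n).le)
    simpa using this
  have hmem : (Φ (Mop f)).re ∈ S (M : Set (H →L[ℂ] H)) := ⟨Φ, hHypM, rfl⟩
  exact le_trans hΦval (le_csSup (hSn_bdd _) hmem)


end
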